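/- On the Ignatiev set I, define ◇ₙ(α) = β where β_{n+1} = 0, βᵢ = 0 for i > n, and βᵢ = αᵢ + ω^{β_{i+1}} for i ≤ n (computed by downward recursion). Then ◇ₙ(α) ∈ I, it lies on the main axis (β_{i+1} = ℓ(βᵢ) for all i), and C_{◇ₙ(α)} = ⋂_{i ≤ n} Rᵢ⁻¹(C_α), where C_γ = {δ ∈ I : δⱼ ≥ γⱼ for all j} and δ Rᵢ γ iff δⱼ = γⱼ for j < i and δᵢ > γᵢ. -/

import Mathlib

open Ordinal

/-- `ell β` is the exponent of the last (smallest) term of the Cantor normal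
form of `β` (base ω), with `ell 0 = 0`. -/
noncomputable def ell (b : Ordinal) : Ordinal :=
  ((Ordinal.CNF omega0 b).map Prod.fst).getLastD 0

/-- `ε₀`, the least ordinal `α` with `ω ^ α = α`. -/
noncomputable def eps0 : Ordinal := Ordinal.nfp (fun a => omega0 ^ a) 0

/-- Membership in the Ignatiev set `I`: sequences of ordinals below `ε₀` with
`α (i+1) ≤ ℓ (α i)` for all `i`. -/
def IgMem (a : ℕ → Ordinal) : Prop :=
  (∀ i, a i < eps0) ∧ ∀ i, a (i + 1) ≤ ell (a i)

/-- `diaSpec n a b` says that `b = ◇ₙ(a)`: `bᵢ = 0` for `i > n` and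
`bᵢ = aᵢ + ω ^ b_{i+1}` for `i ≤ n` (downward recursion, with `b (n+1) = 0`). -/
def diaSpec (n : ℕ) (a b : ℕ → Ordinal) : Prop :=
  (∀ i, n < i → b i = 0) ∧ ∀ i, i ≤ n → b i = a i + omega0 ^ b (i + 1)

/-- `Rrel i d g` : `d Rᵢ g` in the Ignatiev frame. -/
def Rrel (i : ℕ) (d g : ℕ → Ordinal) : Prop :=
  (∀ j, j < i → d j = g j) ∧ g i < d i

private lemma getLastD_of_ne_nil {α : Type*} {l : List α} (h : l ≠ []) (d d' : α) :
    l.getLastD d = l.getLastD d' := by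
  cases l with
  | nil => exact absurd rfl h
  | cons a l => rw [List.getLastD_cons, List.getLastD_cons]

lemma ell_zero : ell 0 = 0 := by simp [ell, Ordinal.CNF.zero_right]

lemma ell_eq_of_mod_eq_zero {x : Ordinal} (hx : x ≠ 0)
    (h : x % omega0 ^ log omega0 x = 0) : ell x = log omega0 x := by
  unfold ell
  rw [CNF.ne_zero hx, h, CNF.zero_right]
  simp

lemma ell_eq_of_mod_ne_zero {x : Ordinal} (hx : x ≠ 0)
    (h : x % omega0 ^ log omega0 x ≠ 0) :
    ell x = ell (x % omega0 ^ log omega0 x) := by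
  unfold ell
  rw [CNF.ne_zero hx]
  simp only [List.map_cons, List.getLastD_cons]
  apply getLastD_of_ne_nil
  rw [CNF.ne_zero h]
  simp

lemma ell_le_log_and_dvd (x : Ordinal) :
    ell x ≤ log omega0 x ∧ omega0 ^ ell x ∣ x := by
  induction x using Ordinal.induction with
  | h x IH =>
  rcases eq_or_ne x 0 with rfl | hx
  · simp [ell_zero]
  rcases eq_or_ne (x % omega0 ^ log omega0 x) 0 with h0 | h0
  · rw [ell_eq_of_mod_eq_zero hx h0]
    refine ⟨le_rfl, ?_⟩
    have h1 := Ordinal.div_add_mod x (omega0 ^ log omega0 x)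
    rw [h0, add_zero] at h1
    exact ⟨_, h1.symm⟩
  · rw [ell_eq_of_mod_ne_zero hx h0]
    have hlt := mod_opow_log_lt_self omega0 hx
    obtain ⟨hle, hdvd⟩ := IH _ hlt
    have hle' : ell (x % omega0 ^ log omega0 x) ≤ log omega0 x :=
      hle.trans (log_mono_right _ hlt.le)
    refine ⟨hle', ?_⟩
    obtain ⟨p, hp⟩ := opow_dvd_opow omega0 hle'
    obtain ⟨q, hq⟩ := hdvd
    refine ⟨p * (x / omega0 ^ log omega0 x) + q, ?_⟩
    rw [mul_add, ← mul_assoc, ← hp, ← hq, Ordinal.div_add_mod]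

lemma lt_add_opow_le {x y γ : Ordinal} (hyx : y < x) (hγ : γ ≤ ell x) :
    y + omega0 ^ γ ≤ x := by
  obtain ⟨-, hdvd⟩ := ell_le_log_and_dvd x
  obtain ⟨q, hq⟩ := (opow_dvd_opow omega0 hγ).trans hdvd
  have hω : (0 : Ordinal) < omega0 ^ γ := opow_pos _ omega0_pos
  have hdivlt : y / omega0 ^ γ < q := by
    rw [Ordinal.div_lt hω.ne']
    exact hq ▸ hyx
  have hmod : y % omega0 ^ γ < omega0 ^ γ := Ordinal.mod_lt y hω.ne'
  calc y + omega0 ^ γ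
      = omega0 ^ γ * (y / omega0 ^ γ) + (y % omega0 ^ γ + omega0 ^ γ) := by
        rw [← add_assoc, Ordinal.div_add_mod]
    _ = omega0 ^ γ * (y / omega0 ^ γ) + omega0 ^ γ := by
        rw [add_omega0_opow hmod]
    _ = omega0 ^ γ * Order.succ (y / omega0 ^ γ) := (mul_succ _ _).symm
    _ ≤ omega0 ^ γ * q := mul_le_mul_right (Order.succ_le_of_lt hdivlt) _
    _ = x := hq.symm

lemma ell_opow (γ : Ordinal) : ell (omega0 ^ γ) = γ := by
  have hx : omega0 ^ γ ≠ 0 := (opow_pos _ omega0_pos).ne'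
  have hlog : log omega0 (omega0 ^ γ) = γ := log_opow one_lt_omega0 _
  have hmod : omega0 ^ γ % omega0 ^ log omega0 (omega0 ^ γ) = 0 := by
    rw [hlog]; exact mod_self _
  rw [ell_eq_of_mod_eq_zero hx hmod, hlog]

lemma ell_add_opow (γ a : Ordinal) : ell (a + omega0 ^ γ) = γ := by
  induction a using Ordinal.induction with
  | h a IH =>
  rcases eq_or_ne a 0 with rfl | ha
  · rw [zero_add, ell_opow]
  rcases lt_or_ge (log omega0 a) γ with hlt | hge
  · have h1 : a < omega0 ^ γ :=
      (lt_opow_succ_log_self one_lt_omega0 a).trans_le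
        (opow_le_opow_right omega0_pos (Order.succ_le_of_lt hlt))
    rw [add_omega0_opow h1, ell_opow]
  · have hωe : (0 : Ordinal) < omega0 ^ log omega0 a := opow_pos _ omega0_pos
    have hdm : omega0 ^ log omega0 a * (a / omega0 ^ log omega0 a)
        + a % omega0 ^ log omega0 a = a := Ordinal.div_add_mod a _
    have hrlt : a % omega0 ^ log omega0 a < omega0 ^ log omega0 a :=
      Ordinal.mod_lt a hωe.ne'
    have hqlt : a / omega0 ^ log omega0 a < omega0 := div_opow_log_lt a one_lt_omega0
    rcases eq_or_lt_of_le hge with heq | hgt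
    · -- γ = log ω a :  a + ω^γ = ω^γ * succ (a / ω^γ)
      rw [heq]
      have hx : a + omega0 ^ log omega0 a
          = omega0 ^ log omega0 a * Order.succ (a / omega0 ^ log omega0 a) := by
        nth_rw 1 [← hdm]
        rw [mul_succ, add_assoc, add_omega0_opow hrlt]
      have hsq : Order.succ (a / omega0 ^ log omega0 a) ≠ 0 :=
        (Order.succ_ne_bot _)
      have hxne : a + omega0 ^ log omega0 a ≠ 0 := by
        rw [hx]
        exact mul_ne_zero (opow_pos _ omega0_pos).ne' hsq
      have hlog : log omega0 (a + omega0 ^ log omega0 a) = log omega0 a := by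
        rw [hx, log_opow_mul one_lt_omega0 _ hsq,
          log_eq_zero (isSuccLimit_omega0.succ_lt hqlt), add_zero]
      have hmod : (a + omega0 ^ log omega0 a)
          % omega0 ^ log omega0 (a + omega0 ^ log omega0 a) = 0 := by
        rw [hlog, hx]
        exact mod_eq_zero_of_dvd ⟨_, rfl⟩
      rw [ell_eq_of_mod_eq_zero hxne hmod, hlog]
    · -- γ < log ω a
      have hsum_lt : a % omega0 ^ log omega0 a + omega0 ^ γ < omega0 ^ log omega0 a :=
        principal_add_omega0_opow _ hrlt
          ((opow_lt_opow_iff_right one_lt_omega0).2 hgt)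
      have hqne : a / omega0 ^ log omega0 a ≠ 0 :=
        (div_opow_log_pos omega0 ha).ne'
      have hx : a + omega0 ^ γ
          = omega0 ^ log omega0 a * (a / omega0 ^ log omega0 a)
            + (a % omega0 ^ log omega0 a + omega0 ^ γ) := by
        rw [← add_assoc, hdm]
      have hxne : a + omega0 ^ γ ≠ 0 := fun h =>
        (opow_pos γ omega0_pos).ne' (Ordinal.add_eq_zero_iff.1 h).2
      have hlog : log omega0 (a + omega0 ^ γ) = log omega0 a := by
        rw [hx, log_opow_mul_add one_lt_omega0 hqne hsum_lt,
          log_eq_zero hqlt, add_zero]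
      have hmod : (a + omega0 ^ γ) % omega0 ^ log omega0 (a + omega0 ^ γ)
          = a % omega0 ^ log omega0 a + omega0 ^ γ := by
        rw [hlog, hx, Ordinal.mul_add_mod_self, Ordinal.mod_eq_of_lt hsum_lt]
      have hmodne : a % omega0 ^ log omega0 a + omega0 ^ γ ≠ 0 := fun h =>
        (opow_pos γ omega0_pos).ne' (Ordinal.add_eq_zero_iff.1 h).2
      rw [ell_eq_of_mod_ne_zero hxne (hmod ▸ hmodne), hmod]
      exact IH _ (mod_opow_log_lt_self omega0 ha)

lemma omega0_opow_eps0 : omega0 ^ eps0 = eps0 :=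
  Ordinal.nfp_fp (isNormal_opow one_lt_omega0) 0

lemma eps0_pos : (0 : Ordinal) < eps0 :=
  omega0_opow_eps0 ▸ opow_pos _ omega0_pos

lemma opow_lt_eps0 {x : Ordinal} (h : x < eps0) : omega0 ^ x < eps0 := by
  conv_rhs => rw [← omega0_opow_eps0]
  exact (opow_lt_opow_iff_right one_lt_omega0).2 h

lemma add_lt_eps0 {x y : Ordinal} (hx : x < eps0) (hy : y < eps0) : x + y < eps0 := by
  rw [← omega0_opow_eps0] at hx hy ⊢
  exact principal_add_omega0_opow _ hx hy

lemma down_induction {P : ℕ → Prop} (n : ℕ) (h0 : ∀ i, n < i → P i)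
    (hstep : ∀ i, i ≤ n → P (i + 1) → P i) : ∀ i, P i := by
  have key : ∀ j i, n + 1 ≤ i + j → P i := by
    intro j
    induction j with
    | zero => intro i hi; exact h0 i (by omega)
    | succ j IHj =>
      intro i hi
      rcases lt_or_ge n i with h | h
      · exact h0 i h
      · exact hstep i h (IHj (i + 1) (by omega))
  intro i; exact key (n + 1) i (by omega)

/-- `◇ₙ(α)` belongs to `I`, lies on the main axis, and its cone is
`⋂_{i ≤ n} Rᵢ⁻¹(C_α)`. -/
theorem stmt_11 (n : ℕ) (a b : ℕ → Ordinal) (ha : IgMem a)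
    (hb : diaSpec n a b) :
    IgMem b ∧ (∀ i, b (i + 1) = ell (b i)) ∧
    ∀ d : ℕ → Ordinal, IgMem d →
      ((∀ j, b j ≤ d j) ↔
        ∀ i, i ≤ n → ∃ g : ℕ → Ordinal, IgMem g ∧ Rrel i d g ∧ ∀ j, a j ≤ g j) := by
  obtain ⟨ha1, ha2⟩ := ha
  obtain ⟨hb0, hbrec⟩ := hb
  have hblt : ∀ i, b i < eps0 := by
    refine down_induction n (fun i hi => ?_) (fun i hi IH => ?_)
    · rw [hb0 i hi]; exact eps0_pos
    · rw [hbrec i hi]; exact add_lt_eps0 (ha1 i) (opow_lt_eps0 IH)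
  have hab : ∀ i, i ≤ n → a i ≤ b i := fun i hi => by
    rw [hbrec i hi]; exact le_self_add
  have hab_lt : ∀ i, i ≤ n → a i < b i := fun i hi => by
    rw [hbrec i hi]
    calc a i = a i + 0 := (add_zero _).symm
      _ < a i + omega0 ^ b (i + 1) := add_lt_add_right (opow_pos _ omega0_pos) _
  have axis : ∀ i, b (i + 1) = ell (b i) := by
    intro i
    rcases le_or_gt i n with hi | hi
    · rw [hbrec i hi, ell_add_opow]
    · rw [hb0 i hi, hb0 (i + 1) (by omega), ell_zero]
  refine ⟨⟨hblt, fun i => (axis i).le⟩, axis, ?_⟩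
  intro d hd
  constructor
  · intro hbd i hi
    refine ⟨fun j => if j < i then d j else a j, ⟨?_, ?_⟩, ⟨?_, ?_⟩, ?_⟩
    · intro j; dsimp only; split
      · exact hd.1 j
      · exact ha1 j
    · intro j; dsimp only
      rcases lt_trichotomy (j + 1) i with h | h | h
      · rw [if_pos h, if_pos (by omega)]; exact hd.2 j
      · rw [if_neg (by omega), if_pos (by omega)]
        have h1 : a (j + 1) ≤ d (j + 1) :=
          (hab _ (by omega)).trans (hbd _)
        exact h1.trans (hd.2 j)
      · rw [if_neg (by omega), if_neg (by omega)]; exact ha2 j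
    · intro j hj; dsimp only; rw [if_pos hj]
    · dsimp only; rw [if_neg (lt_irrefl i)]
      exact (hab_lt i hi).trans_le (hbd i)
    · intro j; dsimp only; split
      · rename_i h
        exact (hab j (by omega)).trans (hbd j)
      · exact le_rfl
  · intro H
    refine down_induction n (fun i hi => ?_) (fun i hi IH => ?_)
    · rw [hb0 i hi]; exact zero_le
    · obtain ⟨g, hg, ⟨hgeq, hglt⟩, hag⟩ := H i hi
      have h1 : a i < d i := (hag i).trans_lt hglt
      have h2 : b (i + 1) ≤ ell (d i) := IH.trans (hd.2 i)
      rw [hbrec i hi]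
      exact lt_add_opow_le h1 h2
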